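/- Let F be an Archimedean vector lattice and H an ideal of F. If every subset G of H⁺ that is order bounded in F is order bounded in H (i.e., has an upper bound lying in H), then H is a projection band. -/

import Mathlib

open Pointwise

variable {F : Type*} [Lattice F] [AddCommGroup F] [Module ℝ F]
  [CovariantClass F F (· + ·) (· ≤ ·)] [PosSMulMono ℝ F]

/-- A subset of a vector lattice is solid if it is nonempty and `|f| ≤ |e|`, `e ∈ E`
imply `f ∈ E`. -/
def Solid (E : Set F) : Prop :=
  E.Nonempty ∧ ∀ f e : F, e ∈ E → |f| ≤ |e| → f ∈ E

/-- An ideal of a vector lattice: a solid linear subspace. -/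
def IsIdeal (E : Set F) : Prop :=
  (0 : F) ∈ E ∧ (∀ x y : F, x ∈ E → y ∈ E → x + y ∈ E) ∧
    (∀ (c : ℝ) (x : F), x ∈ E → c • x ∈ E) ∧ Solid E

/-- The positive part of a set: its elements lying in the positive cone. -/
def posPart (E : Set F) : Set F := E ∩ {x : F | 0 ≤ x}

/-- The disjoint complement of a set. -/
def dComp (G : Set F) : Set F := {f : F | ∀ g ∈ G, |f| ⊓ |g| = 0}

/-- The principal ideal generated by `|e|`. -/
def pIdeal (e : F) : Set F := {f : F | ∃ α : ℝ, 0 ≤ α ∧ |f| ≤ α • |e|}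

private lemma inf_add_inf' (a b c : F) (ha : 0 ≤ a) (hb : 0 ≤ b) (hc : 0 ≤ c) :
    (a + b) ⊓ c ≤ a ⊓ c + b ⊓ c := by
  rw [← sub_le_iff_le_add']
  have key : (a + b) ⊓ c - a ⊓ c = ((a + b) ⊓ c - a) ⊔ ((a + b) ⊓ c - c) := by
    rw [sub_eq_add_neg, neg_inf, add_sup, ← sub_eq_add_neg, ← sub_eq_add_neg]
  rw [key]
  refine sup_le (le_inf ?_ ?_) (le_inf ?_ ?_)
  · exact sub_le_iff_le_add'.mpr inf_le_left
  · exact (sub_le_self _ ha).trans inf_le_right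
  · exact (sub_nonpos.mpr inf_le_right).trans hb
  · exact (sub_nonpos.mpr inf_le_right).trans hc

private lemma dComp_add (a b h : F) (ha : |a| ⊓ |h| = 0) (hb : |b| ⊓ |h| = 0) :
    |a + b| ⊓ |h| = 0 := by
  have h1 : |a + b| ⊓ |h| ≤ (|a| + |b|) ⊓ |h| :=
    inf_le_inf_right _ (abs_add_le a b)
  have h2 := inf_add_inf' |a| |b| |h| (abs_nonneg a) (abs_nonneg b) (abs_nonneg h)
  have h3 : (0 : F) ≤ |a + b| ⊓ |h| := le_inf (abs_nonneg _) (abs_nonneg _)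
  have h4 := h1.trans h2
  rw [ha, hb, add_zero] at h4
  exact le_antisymm h4 h3

private lemma stmt12_pos (H : Set F) (hH : IsIdeal H)
    (hb : ∀ G ⊆ _root_.posPart H, (∃ a b : F, G ⊆ Set.Icc a b) →
      ∃ h ∈ H, ∀ g ∈ G, g ≤ h)
    (f : F) (hf : 0 ≤ f) : ∃ h ∈ H, ∃ d ∈ dComp H, h + d = f := by
  obtain ⟨h0, hadd, hsmul, ⟨hne, hsolid⟩⟩ := hH
  set G : Set F := {g | g ∈ H ∧ 0 ≤ g ∧ g ≤ f} with hGdef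
  have hG1 : G ⊆ _root_.posPart H := fun g ⟨h1, h2, _⟩ => ⟨h1, h2⟩
  have hG2 : ∃ a b : F, G ⊆ Set.Icc a b :=
    ⟨0, f, fun g ⟨_, h2, h3⟩ => ⟨h2, h3⟩⟩
  obtain ⟨h, hhH, hub⟩ := hb G hG1 hG2
  set h' : F := (h ⊓ f) ⊔ 0 with hh'
  have h'nn : 0 ≤ h' := le_sup_right
  have h'H : h' ∈ H := by
    refine hsolid h' h hhH ?_
    rw [abs_of_nonneg h'nn]
    exact sup_le (inf_le_left.trans (le_abs_self h)) (abs_nonneg h)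
  have h'f : h' ≤ f := sup_le inf_le_right hf
  have hd0 : 0 ≤ f - h' := sub_nonneg.mpr h'f
  refine ⟨h', h'H, f - h', ?_, by abel⟩
  intro g hg
  rw [abs_of_nonneg hd0]
  set w : F := (f - h') ⊓ |g| with hw
  have w0 : 0 ≤ w := le_inf hd0 (abs_nonneg g)
  have wH : w ∈ H := by
    refine hsolid w g hg ?_
    rw [abs_of_nonneg w0]
    exact inf_le_right
  have hub' : ∀ g ∈ G, g ≤ h' := by
    intro g hg
    exact ((le_inf (hub g hg) hg.2.2).trans le_sup_left)
  have hmem : h' + w ∈ G := by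
    refine ⟨hadd _ _ h'H wH, add_nonneg h'nn w0, ?_⟩
    exact (le_sub_iff_add_le').mp inf_le_left
  have hle : h' + w ≤ h' := hub' _ hmem
  have : w ≤ 0 := (add_le_iff_nonpos_right h').mp hle
  exact le_antisymm this w0

/-- If every subset of `H⁺` which is order bounded in `F` has an upper bound in `H`,
then the ideal `H` is a projection band. -/
theorem stmt12 (hArch : ∀ f g : F, 0 ≤ f → (∀ n : ℕ, n • g ≤ f) → g ≤ 0)
    (H : Set F) (hH : IsIdeal H)
    (hb : ∀ G ⊆ _root_.posPart H, (∃ a b : F, G ⊆ Set.Icc a b) →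
      ∃ h ∈ H, ∀ g ∈ G, g ≤ h) :
    H + dComp H = Set.univ := by
  obtain ⟨h0, hadd, hsmul, hsol⟩ := hH
  have hneg : ∀ x ∈ H, -x ∈ H := by
    intro x hx
    have := hsmul (-1) x hx
    rwa [neg_one_smul] at this
  ext f
  simp only [Set.mem_univ, iff_true]
  rw [Set.mem_add]
  obtain ⟨h1, h1H, d1, hd1, he1⟩ := stmt12_pos H ⟨h0, hadd, hsmul, hsol⟩ hb (f ⊔ 0) le_sup_right
  obtain ⟨h2, h2H, d2, hd2, he2⟩ := stmt12_pos H ⟨h0, hadd, hsmul, hsol⟩ hb ((-f) ⊔ 0) le_sup_right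
  have hfd : (f ⊔ 0) - ((-f) ⊔ 0) = f := by
    rw [sub_eq_add_neg, neg_sup, neg_neg, neg_zero, add_comm, inf_add_sup, add_zero]
  refine ⟨h1 - h2, ?_, d1 - d2, ?_, ?_⟩
  · rw [sub_eq_add_neg]; exact hadd _ _ h1H (hneg _ h2H)
  · intro g hg
    rw [sub_eq_add_neg]
    refine dComp_add d1 (-d2) g (hd1 g hg) ?_
    rw [abs_neg]
    exact hd2 g hg
  · rw [← hfd, ← he1, ← he2]; abel
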